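/- The lifting conditions imply that the composed inserted and following layers reproduce layer q+1: Given data S, a fully-connected NN, a one-layer deeper NN′, a parameter θ of NN, and any θ′ ∈ T_S(θ) with slope and intercept vectors λ, μ, for every x ∈ S_x one has σ(W′^[q+1] σ(W′^[q̂] f^[q]_θ(x) + b′^[q̂]) + b′^[q+1]) = σ(W^[q+1] f^[q]_θ(x) + b^[q+1]) (with σ applied componentwise; when q+1 = L the outer σ is omitted on both sides). In particular f^[q+1]_{θ′}(x) = f^[q+1]_θ(x) for all x ∈ S_x. -/

import Mathlib

/-!
Common formalization of fully-connected neural networks, one-layer deeper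
networks, and the critical lifting operator from
"Embedding Principle in Depth for the Loss Landscape Analysis of Deep Neural Networks".

Vectors are modelled as functions `ℕ → ℝ` (coordinates beyond the layer width
are irrelevant and feature vectors are zero-padded there); parameters assign to
each layer index `l ≥ 1` a weight "matrix" `ℕ → ℕ → ℝ` and a bias `ℕ → ℝ`.
-/

/-- Parameters of a network: for each layer `l ≥ 1` a weight matrix and a bias. -/
abbrev NNParams : Type := ℕ → (ℕ → ℕ → ℝ) × (ℕ → ℝ)

/-- Feature vectors `f^[l]_θ(x)`: `f^[0]_θ(x) = x` (truncated to the input width),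
`f^[l]_θ(x) = σ(W^[l] f^[l-1]_θ(x) + b^[l])` for `1 ≤ l ≤ L-1`, and no activation
at the output layer `L`.  Coordinates outside the layer width are `0`. -/
noncomputable def feat (σ : ℝ → ℝ) (m : ℕ → ℕ) (L : ℕ) (θ : NNParams) (x : ℕ → ℝ) :
    ℕ → ℕ → ℝ
  | 0 => fun i => if i < m 0 then x i else 0
  | l + 1 => fun i =>
      if i < m (l + 1) then
        (if l + 1 = L then id else σ)
          ((∑ j ∈ Finset.range (m l), (θ (l + 1)).1 i j * feat σ m L θ x l j)
            + (θ (l + 1)).2 i)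
      else 0

/-- Output `f_θ(x) = W^[L] f^[L-1]_θ(x) + b^[L]` of the network. -/
noncomputable def nnOut (σ : ℝ → ℝ) (m : ℕ → ℕ) (L : ℕ) (θ : NNParams) (x : ℕ → ℝ) :
    ℕ → ℝ :=
  feat σ m L θ x L

/-- Pre-activation of layer `l ≥ 1`: `W^[l] f^[l-1]_θ(x) + b^[l]`. -/
noncomputable def preAct (σ : ℝ → ℝ) (m : ℕ → ℕ) (L : ℕ) (θ : NNParams) (x : ℕ → ℝ)
    (l i : ℕ) : ℝ :=
  (∑ j ∈ Finset.range (m (l - 1)), (θ l).1 i j * feat σ m L θ x (l - 1) j) + (θ l).2 i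

/-- `(a,b)` is an affine subdomain of `σ` with slope `lam ≠ 0` and intercept `mu`. -/
def AffineSubdomain (σ : ℝ → ℝ) (a b lam mu : ℝ) : Prop :=
  a < b ∧ lam ≠ 0 ∧ ∀ t ∈ Set.Ioo a b, σ t = lam * t + mu

/-- Widths of the one-layer deeper network obtained by inserting a hidden layer of
width `mh` between layers `q` and `q+1` (the inserted layer gets index `q+1` and
all later layers are shifted up by one). -/
def insertWidth (m : ℕ → ℕ) (q mh : ℕ) : ℕ → ℕ :=
  fun l => if l ≤ q then m l else if l = q + 1 then mh else m (l - 1)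

/-- Local-in-layer condition: all layers of the deeper network other than the inserted
layer (deep index `q+1`) and the following layer (deep index `q+2`) are inherited
from the shallow network. -/
def LocalInLayer (m : ℕ → ℕ) (L q : ℕ) (θ θ' : NNParams) : Prop :=
  (∀ l, 1 ≤ l → l ≤ q →
    (∀ i < m l, ∀ j < m (l - 1), (θ' l).1 i j = (θ l).1 i j) ∧
    (∀ i < m l, (θ' l).2 i = (θ l).2 i)) ∧
  (∀ l, q + 3 ≤ l → l ≤ L + 1 →
    (∀ i < m (l - 1), ∀ j < m (l - 2), (θ' l).1 i j = (θ (l - 1)).1 i j) ∧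
    (∀ i < m (l - 1), (θ' l).2 i = (θ (l - 1)).2 i))

/-- Output preserving condition:
`W'^[q+1] diag(λ) W'^[q̂] = W^[q+1]` and
`W'^[q+1] diag(λ) b'^[q̂] + W'^[q+1] μ + b'^[q+1] = b^[q+1]`
(in deep indexing, `W'^[q̂] = (θ' (q+1)).1` and `W'^[q+1] = (θ' (q+2)).1`). -/
def OutputPres (m : ℕ → ℕ) (q mh : ℕ) (θ θ' : NNParams) (lam mu : ℕ → ℝ) : Prop :=
  (∀ i < m (q + 1), ∀ k < m q,
    (∑ j ∈ Finset.range mh, (θ' (q + 2)).1 i j * (lam j * (θ' (q + 1)).1 j k))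
      = (θ (q + 1)).1 i k) ∧
  (∀ i < m (q + 1),
    (∑ j ∈ Finset.range mh, (θ' (q + 2)).1 i j * (lam j * (θ' (q + 1)).2 j + mu j))
      + (θ' (q + 2)).2 i = (θ (q + 1)).2 i)

/-- `θ'` is a one-layer lifting of `θ` with explicit slope/intercept vectors
`lam, mu` and affine subdomains `(aa j, bb j)`: the local-in-layer, layer
linearization and output preserving conditions. -/
def LiftWitness (σ : ℝ → ℝ) (m : ℕ → ℕ) (L q mh : ℕ) {n : ℕ}
    (S : Fin n → (ℕ → ℝ) × (ℕ → ℝ)) (θ θ' : NNParams) (lam mu aa bb : ℕ → ℝ) : Prop :=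
  LocalInLayer m L q θ θ' ∧
  (∀ j < mh, AffineSubdomain σ (aa j) (bb j) (lam j) (mu j) ∧
    ∀ i : Fin n,
      preAct σ (insertWidth m q mh) (L + 1) θ' (S i).1 (q + 1) j ∈ Set.Ioo (aa j) (bb j)) ∧
  OutputPres m q mh θ θ' lam mu

/-- The one-layer lifting operator `T_S(θ)`: the set of all parameters of the
one-layer deeper network satisfying the local-in-layer, layer linearization and
output preserving conditions. -/
def liftSet (σ : ℝ → ℝ) (m : ℕ → ℕ) (L q mh : ℕ) {n : ℕ}
    (S : Fin n → (ℕ → ℝ) × (ℕ → ℝ)) (θ : NNParams) : Set NNParams :=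
  { θ' | ∃ lam mu aa bb : ℕ → ℝ, LiftWitness σ m L q mh S θ θ' lam mu aa bb }

/-- Empirical risk `R_S(θ) = (1/n) ∑ᵢ ℓ(f_θ(xᵢ), yᵢ)`. -/
noncomputable def empRisk (σ : ℝ → ℝ) (ℓ : (ℕ → ℝ) → (ℕ → ℝ) → ℝ) (m : ℕ → ℕ) (L : ℕ)
    {n : ℕ} (S : Fin n → (ℕ → ℝ) × (ℕ → ℝ)) (θ : NNParams) : ℝ :=
  (1 / (n : ℝ)) * ∑ i : Fin n, ℓ (nnOut σ m L θ (S i).1) (S i).2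

/-- Update a single weight entry `W^[l]_{ij}` of the parameters. -/
def updW (θ : NNParams) (l i j : ℕ) (t : ℝ) : NNParams :=
  fun l' => if l' = l then
    ((fun i' j' => if i' = i ∧ j' = j then t else (θ l).1 i' j'), (θ l).2)
  else θ l'

/-- Update a single bias entry `b^[l]_i` of the parameters. -/
def updB (θ : NNParams) (l i : ℕ) (t : ℝ) : NNParams :=
  fun l' => if l' = l then
    ((θ l).1, fun i' => if i' = i then t else (θ l).2 i')
  else θ l'

/-- `θ` is a critical point of the empirical risk: all partial derivatives with
respect to the weight and bias entries of all layers vanish. -/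
def IsCriticalPt (σ : ℝ → ℝ) (ℓ : (ℕ → ℝ) → (ℕ → ℝ) → ℝ) (m : ℕ → ℕ) (L : ℕ)
    {n : ℕ} (S : Fin n → (ℕ → ℝ) × (ℕ → ℝ)) (θ : NNParams) : Prop :=
  ∀ l, 1 ≤ l → l ≤ L →
    (∀ i < m l, ∀ j < m (l - 1),
      deriv (fun t => empRisk σ ℓ m L S (updW θ l i j t)) ((θ l).1 i j) = 0) ∧
    (∀ i < m l,
      deriv (fun t => empRisk σ ℓ m L S (updB θ l i t)) ((θ l).2 i) = 0)

/-- Feature gradients `g^[l]_θ(x)`: `g^[L] = 1` and `g^[l] = σ'(W^[l] f^[l-1] + b^[l])`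
for `l ≤ L-1`; coordinates outside the layer width are `0`. -/
noncomputable def featGrad (σ : ℝ → ℝ) (m : ℕ → ℕ) (L : ℕ) (θ : NNParams) (x : ℕ → ℝ)
    (l i : ℕ) : ℝ :=
  if i < m l then (if l = L then 1 else deriv σ (preAct σ m L θ x l i)) else 0

/-- Auxiliary downward recursion for error vectors: `errVecAux … k = z^[L-k]`. -/
noncomputable def errVecAux (σ : ℝ → ℝ) (ℓ : (ℕ → ℝ) → (ℕ → ℝ) → ℝ) (m : ℕ → ℕ) (L : ℕ)
    (θ : NNParams) (x y : ℕ → ℝ) : ℕ → ℕ → ℝ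
  | 0 => fun i =>
      if i < m L then
        deriv (fun t => ℓ (Function.update (nnOut σ m L θ x) i t) y) (nnOut σ m L θ x i)
      else 0
  | k + 1 => fun i =>
      if i < m (L - (k + 1)) then
        ∑ p ∈ Finset.range (m (L - k)),
          (θ (L - k)).1 p i * (errVecAux σ ℓ m L θ x y k p * featGrad σ m L θ x (L - k) p)
      else 0

/-- Error vectors `z^[l]_θ(x)`: `z^[L] = ∇_f ℓ(f_θ(x), y)` and
`z^[l] = (W^[l+1])ᵀ (z^[l+1] ∘ g^[l+1])`. -/
noncomputable def errVec (σ : ℝ → ℝ) (ℓ : (ℕ → ℝ) → (ℕ → ℝ) → ℝ) (m : ℕ → ℕ) (L : ℕ)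
    (θ : NNParams) (x y : ℕ → ℝ) (l : ℕ) : ℕ → ℝ :=
  errVecAux σ ℓ m L θ x y (L - l)

/-- A list of insertion positions/widths `(q, mh)` describes a valid chain of
one-layer-deeper insertions starting from widths `m` and depth `L`. -/
def ValidChain (m : ℕ → ℕ) (L : ℕ) : List (ℕ × ℕ) → Prop
  | [] => True
  | (q, mh) :: rest =>
      1 ≤ q ∧ q + 1 ≤ L ∧ min (m q) (m (q + 1)) ≤ mh ∧
        ValidChain (insertWidth m q mh) (L + 1) rest

/-- The widths obtained after performing a chain of insertions. -/
def chainWidths (m : ℕ → ℕ) : List (ℕ × ℕ) → (ℕ → ℕ)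
  | [] => m
  | (q, mh) :: rest => chainWidths (insertWidth m q mh) rest

/-- Multi-layer lifting: the composition of the one-layer liftings along a chain of
insertions. -/
def liftChain (σ : ℝ → ℝ) {n : ℕ} (S : Fin n → (ℕ → ℝ) × (ℕ → ℝ)) :
    (ℕ → ℕ) → ℕ → List (ℕ × ℕ) → NNParams → Set NNParams
  | _, _, [], θ => {θ}
  | m, L, (q, mh) :: rest, θ =>
      {θ'' | ∃ θ', θ' ∈ liftSet σ m L q mh S θ ∧
        θ'' ∈ liftChain σ S (insertWidth m q mh) (L + 1) rest θ'}

/-- `NN'` (widths `m'`, depth `L + J`) is `J`-layer deeper than `NN` (widths `m`,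
depth `L`): it is obtained by `J` successive one-layer insertions, each inserted
layer having width at least the minimum of the widths of its neighboring layers. -/
def JDeeper : ℕ → (ℕ → ℕ) → ℕ → (ℕ → ℕ) → Prop
  | 0, m, L, m' => ∀ l ≤ L, m' l = m l
  | J + 1, m, L, m' =>
      ∃ mmid, JDeeper J m L mmid ∧
        ∃ q mh, 1 ≤ q ∧ q + 1 ≤ L + J ∧ min (mmid q) (mmid (q + 1)) ≤ mh ∧
          ∀ l ≤ L + J + 1, m' l = insertWidth mmid q mh l

/-- Features of the deeper network agree with the shallow one up to layer `q`. -/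
lemma feat_eq_of_le_aux (σ : ℝ → ℝ) (m : ℕ → ℕ) (L q mh : ℕ) (hqL : q + 1 ≤ L)
    (θ θ' : NNParams) (hloc : LocalInLayer m L q θ θ') (x : ℕ → ℝ) :
    ∀ l, l ≤ q → feat σ (insertWidth m q mh) (L + 1) θ' x l = feat σ m L θ x l := by
  intro l
  induction l with
  | zero =>
    intro _
    funext i
    simp [feat, insertWidth]
  | succ l ih =>
    intro hl
    have hl' : l ≤ q := Nat.le_of_succ_le hl
    funext i
    have hmw : insertWidth m q mh (l + 1) = m (l + 1) := by simp [insertWidth, hl]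
    have hmw' : insertWidth m q mh l = m l := by simp [insertWidth, hl']
    have hne1 : l + 1 ≠ L + 1 := by omega
    have hne2 : l + 1 ≠ L := by omega
    by_cases hi : i < m (l + 1)
    · have hW := (hloc.1 (l + 1) (by omega) hl).1 i hi
      have hb := (hloc.1 (l + 1) (by omega) hl).2 i hi
      simp only [feat, hmw, hmw', ih hl', if_pos hi, if_neg hne1, if_neg hne2]
      rw [hb]
      have hsum : (∑ j ∈ Finset.range (m l), (θ' (l + 1)).1 i j * feat σ m L θ x l j)
          = ∑ j ∈ Finset.range (m l), (θ (l + 1)).1 i j * feat σ m L θ x l j :=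
        Finset.sum_congr rfl fun j hj => by rw [hW j (Finset.mem_range.mp hj)]
      rw [hsum]
    · simp only [feat, hmw, if_neg hi]

/-- **The lifting conditions imply that the composed inserted and following layers
reproduce layer `q+1`.**  For any lift witness, on every training input
`σ(W'^[q+1] σ(W'^[q̂] f^[q]_θ(x) + b'^[q̂]) + b'^[q+1]) = σ(W^[q+1] f^[q]_θ(x) + b^[q+1])`
(the outer `σ` omitted when `q+1 = L`); in particular
`f^[q+1]_{θ'}(x) = f^[q+1]_θ(x)`. -/
theorem composed_layers_reproduce_next_layer
    (σ : ℝ → ℝ) (m : ℕ → ℕ) (L q mh : ℕ)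
    (hq : 1 ≤ q) (hqL : q + 1 ≤ L)
    (hmh : min (m q) (m (q + 1)) ≤ mh)
    {n : ℕ} (S : Fin n → (ℕ → ℝ) × (ℕ → ℝ)) (θ θ' : NNParams)
    (lam mu aa bb : ℕ → ℝ)
    (hwit : LiftWitness σ m L q mh S θ θ' lam mu aa bb) :
    ∀ i : Fin n, ∀ idx < m (q + 1),
      (if q + 1 = L then id else σ)
          ((∑ j ∈ Finset.range mh, (θ' (q + 2)).1 idx j *
              σ ((∑ k ∈ Finset.range (m q),
                    (θ' (q + 1)).1 j k * feat σ m L θ (S i).1 q k)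
                  + (θ' (q + 1)).2 j))
            + (θ' (q + 2)).2 idx)
        = (if q + 1 = L then id else σ) (preAct σ m L θ (S i).1 (q + 1) idx) ∧
      feat σ (insertWidth m q mh) (L + 1) θ' (S i).1 (q + 2) idx
        = feat σ m L θ (S i).1 (q + 1) idx := by
  obtain ⟨hloc, hlin, hout⟩ := hwit
  intro i idx hidx
  set x := (S i).1 with hx
  have hfeat : feat σ (insertWidth m q mh) (L + 1) θ' x q = feat σ m L θ x q :=
    feat_eq_of_le_aux σ m L q mh hqL θ θ' hloc x q le_rfl
  have hmq : insertWidth m q mh q = m q := by simp [insertWidth]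
  have hmq1 : insertWidth m q mh (q + 1) = mh := by simp [insertWidth]
  have hmq2 : insertWidth m q mh (q + 2) = m (q + 1) := by
    simp [insertWidth]
  set f : ℕ → ℝ := feat σ m L θ x q with hf
  set W1 : ℕ → ℕ → ℝ := (θ' (q + 1)).1 with hW1
  set b1 : ℕ → ℝ := (θ' (q + 1)).2 with hb1
  set W2 : ℕ → ℕ → ℝ := (θ' (q + 2)).1 with hW2
  set b2 : ℕ → ℝ := (θ' (q + 2)).2 with hb2
  -- the pre-activation of the inserted layer
  set A : ℕ → ℝ := fun j => (∑ k ∈ Finset.range (m q), W1 j k * f k) + b1 j with hA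
  have hpre : ∀ j, preAct σ (insertWidth m q mh) (L + 1) θ' x (q + 1) j = A j := by
    intro j
    simp only [preAct, Nat.add_sub_cancel, hmq, hfeat, hA]
    rfl
  have hσA : ∀ j < mh, σ (A j) = lam j * A j + mu j := by
    intro j hj
    obtain ⟨⟨-, -, haff⟩, hmem⟩ := hlin j hj
    have hm := hmem i
    rw [← hx, hpre j] at hm
    exact haff _ hm
  -- main algebraic identity
  have hsum : (∑ j ∈ Finset.range mh, W2 idx j * σ (A j)) + b2 idx
      = preAct σ m L θ x (q + 1) idx := by
    have expand : ∀ j ∈ Finset.range mh,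
        W2 idx j * σ (A j)
          = (∑ k ∈ Finset.range (m q), (W2 idx j * (lam j * W1 j k)) * f k)
            + W2 idx j * (lam j * b1 j + mu j) := by
      intro j hj
      have hSS : (∑ k ∈ Finset.range (m q), (W2 idx j * (lam j * W1 j k)) * f k)
          = W2 idx j * lam j * (∑ k ∈ Finset.range (m q), W1 j k * f k) := by
        rw [Finset.mul_sum]
        exact Finset.sum_congr rfl fun k _ => by ring
      rw [hσA j (Finset.mem_range.mp hj), hSS]
      simp only [hA]
      ring
    rw [Finset.sum_congr rfl expand, Finset.sum_add_distrib, Finset.sum_comm]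
    have hswap : ∀ k ∈ Finset.range (m q),
        (∑ j ∈ Finset.range mh, (W2 idx j * (lam j * W1 j k)) * f k)
          = (θ (q + 1)).1 idx k * f k := by
      intro k hk
      rw [← Finset.sum_mul]
      congr 1
      exact hout.1 idx hidx k (Finset.mem_range.mp hk)
    rw [Finset.sum_congr rfl hswap]
    have hbias := hout.2 idx hidx
    simp only [preAct, Nat.add_sub_cancel, ← hf]
    rw [add_assoc, hbias]
  constructor
  · exact congrArg _ hsum
  · have hne2 : (q + 2 = L + 1) = (q + 1 = L) := by
      simp only [eq_iff_iff]; omega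
    have hfeat2 : feat σ (insertWidth m q mh) (L + 1) θ' x (q + 2) idx
        = (if q + 1 = L then id else σ)
            ((∑ j ∈ Finset.range mh, W2 idx j * σ (A j)) + b2 idx) := by
      have hlt : idx < insertWidth m q mh (q + 2) := by rw [hmq2]; exact hidx
      have h22 : q + 1 + 1 = q + 2 := rfl
      have hne : q + 1 ≠ L + 1 := by omega
      show (if idx < insertWidth m q mh (q + 1 + 1) then
          (if q + 1 + 1 = L + 1 then id else σ)
            ((∑ j ∈ Finset.range (insertWidth m q mh (q + 1)),
                (θ' (q + 1 + 1)).1 idx j *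
                  feat σ (insertWidth m q mh) (L + 1) θ' x (q + 1) j)
              + (θ' (q + 1 + 1)).2 idx)
        else 0) = _
      have hif : (if q + 2 = L + 1 then (id : ℝ → ℝ) else σ)
          = (if q + 1 = L then id else σ) := by
        by_cases h : q + 1 = L
        · rw [if_pos (by omega), if_pos h]
        · rw [if_neg (by omega), if_neg h]
      rw [h22, if_pos hlt, hmq1, hif]
      have hterm : ∀ j ∈ Finset.range mh,
          (θ' (q + 2)).1 idx j * feat σ (insertWidth m q mh) (L + 1) θ' x (q + 1) j
            = W2 idx j * σ (A j) := by
        intro j hj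
        have hj' := Finset.mem_range.mp hj
        show (θ' (q + 2)).1 idx j *
            (if j < insertWidth m q mh (q + 1) then
              (if q + 1 = L + 1 then id else σ)
                ((∑ k ∈ Finset.range (insertWidth m q mh q),
                    (θ' (q + 1)).1 j k * feat σ (insertWidth m q mh) (L + 1) θ' x q k)
                  + (θ' (q + 1)).2 j)
            else 0) = _
        rw [hmq1, if_pos hj', if_neg hne, hmq, hfeat]
      rw [Finset.sum_congr rfl hterm]
    have hfeatS : feat σ m L θ x (q + 1) idx
        = (if q + 1 = L then id else σ) (preAct σ m L θ x (q + 1) idx) := by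
      simp only [feat, if_pos hidx, preAct, Nat.add_sub_cancel]
    rw [hfeat2, hsum, hfeatS]
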